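/- Let m, n be positive integers with m ≥ n, 𝔪 a regular nilpotent endomorphism of ℂ^m and 𝔫 a regular nilpotent endomorphism of ℂ^n. Then the endomorphism 𝔪 ⊗ 1 + 1 ⊗ 𝔫 of ℂ^m ⊗ ℂ^n is nilpotent and its kernel has dimension min(m, n). -/

import Mathlib

open TensorProduct


open TensorProduct Module

lemma pow_finrank_eq_zero' {K M : Type*} [Field K] [AddCommGroup M] [Module K M]
    [FiniteDimensional K M] {f : Module.End K M} (h : IsNilpotent f) :
    f ^ Module.finrank K M = 0 := by
  have hch := h.charpoly_eq_X_pow_finrank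
  have h2 := LinearMap.aeval_self_charpoly f
  rw [hch] at h2
  simpa using h2

lemma finrank_le_map_add_ker' {K M : Type*} [Field K] [AddCommGroup M] [Module K M]
    [FiniteDimensional K M] (f : Module.End K M) (U : Submodule K M) :
    Module.finrank K U ≤ Module.finrank K (U.map f) + Module.finrank K (LinearMap.ker f) := by
  have h1 := LinearMap.finrank_range_add_finrank_ker (f.domRestrict U)
  rw [LinearMap.range_domRestrict] at h1
  have h2 : Module.finrank K (LinearMap.ker (f.domRestrict U))
      ≤ Module.finrank K (LinearMap.ker f) := by
    refine LinearMap.finrank_le_finrank_of_injective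
      (f := LinearMap.codRestrict (LinearMap.ker f)
        (U.subtype ∘ₗ (LinearMap.ker (f.domRestrict U)).subtype) fun x => ?_) ?_
    · have hx := x.2
      rw [LinearMap.mem_ker] at hx ⊢
      exact hx
    · intro x y hxy
      have := congrArg (Subtype.val) hxy
      simp only [LinearMap.codRestrict_apply, LinearMap.comp_apply,
        Submodule.coe_subtype] at this
      exact Subtype.ext (Subtype.ext this)
  omega

-- rank of powers of a "corank 1" endomorphism
lemma finrank_range_pow_ge' {K M : Type*} [Field K] [AddCommGroup M] [Module K M]
    [FiniteDimensional K M] (f : Module.End K M)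
    (hker : Module.finrank K (LinearMap.ker f) ≤ 1) (k : ℕ) :
    Module.finrank K M - k ≤ Module.finrank K (LinearMap.range (f ^ k)) := by
  induction k with
  | zero =>
      simp only [pow_zero, Nat.sub_zero]
      have : LinearMap.range (f ^ 0) = ⊤ := by
        rw [pow_zero]
        exact LinearMap.range_eq_top.mpr fun x => ⟨x, rfl⟩
      rw [this]
      simp
  | succ k ih =>
      have hr : LinearMap.range (f ^ (k+1)) = (LinearMap.range (f ^ k)).map f := by
        rw [pow_succ']
        exact LinearMap.range_comp _ _
      have h3 := finrank_le_map_add_ker' f (LinearMap.range (f ^ k))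
      rw [hr]
      omega

open TensorProduct Module

section Aux

variable {K : Type*} [Field K] {V W : Type*} [AddCommGroup V] [Module K V]
  [AddCommGroup W] [Module K W] [FiniteDimensional K W]

lemma aux_ker_finrank {m : ℕ} (hm : 0 < m) (b : Basis (Fin m) K V)
    (f : Module.End K V) (g : Module.End K W)
    (hfb : ∀ i : Fin m, f (b i) = if h : (i : ℕ) + 1 < m then b ⟨(i : ℕ) + 1, h⟩ else 0)
    (hgm : g ^ m = 0) :
    Module.finrank K (LinearMap.ker (TensorProduct.map f LinearMap.id
      + TensorProduct.map LinearMap.id g : Module.End K (V ⊗[K] W)))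
      = Module.finrank K W := by
  classical
  set D : Module.End K (V ⊗[K] W) :=
    TensorProduct.map f LinearMap.id + TensorProduct.map LinearMap.id g with hD
  -- the cyclic "basis" extended by zero
  set c : ℕ → V := fun i => if h : i < m then b ⟨i, h⟩ else 0 with hc
  have hfc : ∀ i, f (c i) = c (i + 1) := by
    intro i
    by_cases h : i < m
    · have : c i = b ⟨i, h⟩ := dif_pos h
      rw [this, hfb ⟨i, h⟩]
    · have h2 : ¬ (i + 1 < m) := by omega
      simp [hc, dif_neg h, dif_neg h2]
  -- coordinate functionals extended by zero
  set φ : ℕ → (V →ₗ[K] K) := fun i => if h : i < m then b.coord ⟨i, h⟩ else 0 with hφ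
  have hφc : ∀ i j, φ i (c j) = if i = j ∧ j < m then 1 else 0 := by
    intro i j
    by_cases hj : j < m
    · by_cases hi : i < m
      · simp only [hφ, hc, dif_pos hi, dif_pos hj, Basis.coord_apply, Basis.repr_self]
        rw [Finsupp.single_apply]
        simp only [Fin.mk.injEq]
        by_cases hij : i = j
        · simp [hij, hj]
        · simp [hij, Ne.symm hij]
      · have hij : ¬ (i = j) := by omega
        simp [hφ, dif_neg hi, hij]
    · simp [hc, dif_neg hj, hj]
  -- coordinate maps on the tensor product
  set π : ℕ → (V ⊗[K] W →ₗ[K] W) := fun i =>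
    (TensorProduct.lid K W).toLinearMap ∘ₗ LinearMap.rTensor W (φ i) with hπdef
  have hπ : ∀ i (v : V) (w : W), π i (v ⊗ₜ[K] w) = φ i v • w := by
    intro i v w
    simp [hπdef]
  -- expansion
  have hexp : ∀ x : V ⊗[K] W, x = ∑ i ∈ Finset.range m, c i ⊗ₜ[K] π i x := by
    intro x
    induction x using TensorProduct.induction_on with
    | zero => simp
    | tmul v w =>
        have : ∀ i ∈ Finset.range m, c i ⊗ₜ[K] π i (v ⊗ₜ[K] w) = (φ i v • c i) ⊗ₜ[K] w := by
          intro i _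
          rw [hπ, TensorProduct.smul_tmul, TensorProduct.tmul_smul]
        rw [Finset.sum_congr rfl this, ← TensorProduct.sum_tmul]
        congr 1
        rw [← Fin.sum_univ_eq_sum_range (fun i => φ i v • c i) m]
        conv_lhs => rw [← Basis.sum_repr b v]
        refine Finset.sum_congr rfl fun i _ => ?_
        simp [hφ, hc, i.isLt, Basis.coord_apply]
    | add x y hx hy =>
        conv_lhs => rw [hx, hy]
        rw [← Finset.sum_add_distrib]
        refine Finset.sum_congr rfl fun i _ => ?_
        rw [map_add, TensorProduct.tmul_add]
  -- functional identities
  have hφf : ∀ (i : ℕ), i + 1 < m → ∀ v, φ (i+1) (f v) = φ i v := by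
    intro i hi
    have key : (φ (i+1)).comp f = φ i := by
      apply b.ext
      intro j
      have hbj : (b j : V) = c (j : ℕ) := by
        simp only [hc, dif_pos j.isLt, Fin.eta]
      simp only [LinearMap.comp_apply]
      rw [hbj, hfc, hφc, hφc]
      have hj := j.isLt
      split_ifs <;> first | rfl | (exfalso; omega)
    intro v
    exact LinearMap.congr_fun key v
  have hφ0 : ∀ v, φ 0 (f v) = 0 := by
    have key : (φ 0).comp f = 0 := by
      apply b.ext
      intro j
      have hbj : (b j : V) = c (j : ℕ) := by
        simp only [hc, dif_pos j.isLt, Fin.eta]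
      simp only [LinearMap.comp_apply, LinearMap.zero_apply]
      rw [hbj, hfc, hφc]
      exact if_neg (by omega)
    intro v
    exact LinearMap.congr_fun key v
  have hπf : ∀ (i : ℕ), i + 1 < m →
      ∀ y, π (i+1) (TensorProduct.map f LinearMap.id y) = π i y := by
    intro i hi y
    induction y using TensorProduct.induction_on with
    | zero => simp
    | tmul v w => rw [TensorProduct.map_tmul, LinearMap.id_apply, hπ, hπ, hφf i hi]
    | add x y hx hy => rw [map_add, map_add, map_add, hx, hy]
  have hπ0 : ∀ y, π 0 (TensorProduct.map f LinearMap.id y) = 0 := by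
    intro y
    induction y using TensorProduct.induction_on with
    | zero => simp
    | tmul v w => rw [TensorProduct.map_tmul, LinearMap.id_apply, hπ, hφ0, zero_smul]
    | add x y hx hy => rw [map_add, map_add, hx, hy, add_zero]
  have hπg : ∀ (i : ℕ) y, π i (TensorProduct.map LinearMap.id g y) = g (π i y) := by
    intro i y
    induction y using TensorProduct.induction_on with
    | zero => simp
    | tmul v w =>
        rw [TensorProduct.map_tmul, LinearMap.id_apply, hπ, hπ, map_smul]
    | add x y hx hy => simp only [map_add, hx, hy]
  -- the map Φ parametrizing the kernel
  set Φ : W →ₗ[K] V ⊗[K] W := ∑ i ∈ Finset.range m,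
      (TensorProduct.mk K V W (c i)).comp ((-g) ^ (m - 1 - i)) with hΦdef
  have hΦ : ∀ u, Φ u = ∑ i ∈ Finset.range m, c i ⊗ₜ[K] (((-g) ^ (m - 1 - i)) u) := by
    intro u
    rw [hΦdef, LinearMap.sum_apply]
    rfl
  have hgm' : (-g) ^ m = 0 := by
    rw [neg_pow, hgm]
    simp
  have hΦker : ∀ u, D (Φ u) = 0 := by
    intro u
    rw [hΦ, map_sum]
    have key : ∀ i ∈ Finset.range m,
        D (c i ⊗ₜ[K] (((-g) ^ (m - 1 - i)) u))
          = c (i+1) ⊗ₜ[K] (((-g) ^ (m - (i+1))) u) - c i ⊗ₜ[K] (((-g) ^ (m - i)) u) := by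
      intro i hi
      rw [Finset.mem_range] at hi
      rw [hD]
      simp only [LinearMap.add_apply, TensorProduct.map_tmul, LinearMap.id_apply]
      rw [hfc]
      have e1 : m - 1 - i = m - (i+1) := by omega
      have e2 : g (((-g) ^ (m - 1 - i)) u) = -(((-g) ^ (m - i)) u) := by
        have e3 : (-g) ^ (m - i) = (-g) * (-g) ^ (m - 1 - i) := by
          rw [← pow_succ']
          congr 1
          omega
        rw [e3]
        simp [Module.End.mul_apply]
      rw [e2, TensorProduct.tmul_neg, e1]
      exact (sub_eq_add_neg _ _).symm
    rw [Finset.sum_congr rfl key,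
      Finset.sum_range_sub (fun i => c i ⊗ₜ[K] (((-g) ^ (m - i)) u))]
    have hcm : c m = 0 := dif_neg (lt_irrefl m)
    rw [hcm]
    simp [hgm']
  have hΦtop : ∀ u, π (m-1) (Φ u) = u := by
    intro u
    rw [hΦ, map_sum]
    have key : ∀ i ∈ Finset.range m, π (m-1) (c i ⊗ₜ[K] (((-g) ^ (m - 1 - i)) u))
        = if m - 1 = i then ((-g) ^ (m - 1 - i)) u else 0 := by
      intro i hi
      rw [Finset.mem_range] at hi
      rw [hπ, hφc]
      split_ifs <;> first | (exfalso; omega) | rw [one_smul] | rw [zero_smul]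
    rw [Finset.sum_congr rfl key, Finset.sum_ite_eq]
    have : m - 1 ∈ Finset.range m := Finset.mem_range.mpr (by omega)
    rw [if_pos this, Nat.sub_self]
    simp
  -- kernel equals range of Φ
  have hker_le : LinearMap.ker D ≤ LinearMap.range Φ := by
    intro x hx
    rw [LinearMap.mem_ker] at hx
    have hrec : ∀ i, i + 1 < m → π i x = (-g) (π (i+1) x) := by
      intro i hi
      have h0 : π (i+1) ((TensorProduct.map f LinearMap.id) x)
          + π (i+1) ((TensorProduct.map LinearMap.id g) x) = 0 := by
        rw [← map_add, ← LinearMap.add_apply, ← hD, hx, map_zero]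
      rw [hπf i hi, hπg] at h0
      have := eq_neg_of_add_eq_zero_left h0
      simpa using this
    have hclosed : ∀ k, k ≤ m - 1 → π (m-1-k) x = ((-g)^k) (π (m-1) x) := by
      intro k
      induction k with
      | zero => intro _; simp
      | succ k ih =>
          intro hk
          have hk' : k ≤ m - 1 := by omega
          have e : m - 1 - (k+1) + 1 = m - 1 - k := by omega
          have hlt : m - 1 - (k+1) + 1 < m := by omega
          have h1 := hrec (m-1-(k+1)) hlt
          rw [e] at h1
          rw [h1, ih hk', pow_succ']
          simp [Module.End.mul_apply]
    refine ⟨π (m-1) x, ?_⟩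
    rw [hΦ]
    conv_rhs => rw [hexp x]
    refine Finset.sum_congr rfl fun i hi => ?_
    rw [Finset.mem_range] at hi
    congr 1
    have h2 : m - 1 - (m-1-i) = i := by omega
    have h3 := hclosed (m-1-i) (by omega)
    rw [h2] at h3
    exact h3.symm
  have hrange_le : LinearMap.range Φ ≤ LinearMap.ker D := by
    rintro x ⟨u, rfl⟩
    exact LinearMap.mem_ker.mpr (hΦker u)
  have hΦinj : Function.Injective Φ := by
    rw [← LinearMap.ker_eq_bot]
    refine (Submodule.eq_bot_iff _).mpr fun u hu => ?_
    rw [LinearMap.mem_ker] at hu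
    have h4 := hΦtop u
    rw [hu, map_zero] at h4
    exact h4.symm
  rw [le_antisymm hker_le hrange_le]
  exact LinearMap.finrank_range_of_inj hΦinj

end Aux


/-- For m ≥ n and regular nilpotent 𝔪, 𝔫 on ℂ^m, ℂ^n, the operator 𝔪 ⊗ 1 + 1 ⊗ 𝔫 is
nilpotent and its kernel has dimension min(m,n). -/
theorem tensor_sum_regular_nilpotent_ker (m n : ℕ) (hm : 0 < m) (hn : 0 < n) (hmn : n ≤ m)
    (f : Module.End ℂ (Fin m → ℂ)) (g : Module.End ℂ (Fin n → ℂ))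
    (hfnil : IsNilpotent f) (hgnil : IsNilpotent g)
    (hf : Module.finrank ℂ (LinearMap.range f) = m - 1)
    (hg : Module.finrank ℂ (LinearMap.range g) = n - 1) :
    IsNilpotent (TensorProduct.map f LinearMap.id + TensorProduct.map LinearMap.id g
      : Module.End ℂ ((Fin m → ℂ) ⊗[ℂ] (Fin n → ℂ))) ∧
    Module.finrank ℂ (LinearMap.ker
      (TensorProduct.map f LinearMap.id + TensorProduct.map LinearMap.id g
      : Module.End ℂ ((Fin m → ℂ) ⊗[ℂ] (Fin n → ℂ)))) = min m n := by
  classical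
  have hVfr : Module.finrank ℂ (Fin m → ℂ) = m := Module.finrank_fin_fun ℂ
  have hWfr : Module.finrank ℂ (Fin n → ℂ) = n := Module.finrank_fin_fun ℂ
  have hfm : f ^ m = 0 := by
    have h := hfnil.charpoly_eq_X_pow_finrank
    have h2 := LinearMap.aeval_self_charpoly f
    rw [h] at h2
    rw [hVfr] at h2
    rwa [map_pow, Polynomial.aeval_X] at h2
  have hgn : g ^ n = 0 := by
    have h := hgnil.charpoly_eq_X_pow_finrank
    have h2 := LinearMap.aeval_self_charpoly g
    rw [h] at h2
    rw [hWfr] at h2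
    rwa [map_pow, Polynomial.aeval_X] at h2
  have hgm : g ^ m = 0 := by
    have h : g ^ m = g ^ n * g ^ (m - n) := by
      rw [← pow_add]
      congr 1
      omega
    rw [h, hgn, zero_mul]
  -- nilpotency of the sum
  have hcomm : Commute (TensorProduct.map f (LinearMap.id : Module.End ℂ (Fin n → ℂ)))
      (TensorProduct.map (LinearMap.id : Module.End ℂ (Fin m → ℂ)) g) := by
    unfold Commute SemiconjBy
    rw [Module.End.mul_eq_comp, Module.End.mul_eq_comp, ← TensorProduct.map_comp,
      ← TensorProduct.map_comp, LinearMap.comp_id, LinearMap.id_comp,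
      LinearMap.comp_id, LinearMap.id_comp]
  have hnil1 : IsNilpotent (TensorProduct.map f (LinearMap.id : Module.End ℂ (Fin n → ℂ))) := by
    refine ⟨m, ?_⟩
    rw [TensorProduct.map_pow, hfm, Module.End.id_pow, TensorProduct.map_zero_left]
  have hnil2 : IsNilpotent (TensorProduct.map (LinearMap.id : Module.End ℂ (Fin m → ℂ)) g) := by
    refine ⟨n, ?_⟩
    rw [TensorProduct.map_pow, hgn, Module.End.id_pow, TensorProduct.map_zero_right]
  have hnil := hcomm.isNilpotent_add hnil1 hnil2
  -- regular nilpotent structure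
  have hker1 : Module.finrank ℂ (LinearMap.ker f) ≤ 1 := by
    have h1 := LinearMap.finrank_range_add_finrank_ker f
    rw [hf, hVfr] at h1
    omega
  have hpow : f ^ (m - 1) ≠ 0 := by
    intro h0
    have h1 := finrank_range_pow_ge' f hker1 (m - 1)
    rw [h0, hVfr, LinearMap.range_zero, finrank_bot] at h1
    omega
  obtain ⟨e, he⟩ : ∃ e, (f ^ (m - 1)) e ≠ 0 := by
    by_contra h
    push_neg at h
    exact hpow (LinearMap.ext fun x => h x)
  have hli : LinearIndependent ℂ (fun i : Fin m => (f ^ (i : ℕ)) e) := by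
    rw [Fintype.linearIndependent_iff]
    intro u hu
    suffices H : ∀ N, ∀ i : Fin m, (i : ℕ) = N → u i = 0 by
      intro i
      exact H i i rfl
    intro N
    induction N using Nat.strong_induction_on with
    | _ N ih =>
      intro i hiN
      have happ := congrArg (f ^ (m - 1 - N)) hu
      rw [map_sum, map_zero] at happ
      have hsum : ∑ j : Fin m, (f ^ (m - 1 - N)) (u j • (f ^ (j : ℕ)) e)
          = u i • (f ^ (m - 1)) e := by
        rw [Finset.sum_eq_single i]
        · rw [map_smul]
          congr 1
          rw [← Module.End.mul_apply, ← pow_add]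
          congr 2
          have := i.isLt
          omega
        · intro j _ hji
          rw [map_smul]
          by_cases hjN : (j : ℕ) < N
          · rw [ih (j : ℕ) hjN j rfl, zero_smul]
          · have hjN' : N < (j : ℕ) := by
              rcases Nat.lt_or_ge N (j : ℕ) with h | h
              · exact h
              · exfalso
                apply hji
                apply Fin.ext
                omega
            have hz : (f ^ (m - 1 - N)) ((f ^ (j : ℕ)) e) = 0 := by
              have ha : m - 1 - N + (j : ℕ) = m + (m - 1 - N + (j : ℕ) - m) := by
                have := i.isLt
                omega
              rw [← Module.End.mul_apply, ← pow_add, ha, pow_add, hfm, zero_mul,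
                LinearMap.zero_apply]
            rw [hz, smul_zero]
        · intro hnot
          exact absurd (Finset.mem_univ i) hnot
      rw [hsum] at happ
      rcases smul_eq_zero.mp happ with h | h
      · exact h
      · exact absurd h he
  have hcard : Fintype.card (Fin m) = Module.finrank ℂ (Fin m → ℂ) := by
    rw [hVfr, Fintype.card_fin]
  haveI : Nonempty (Fin m) := ⟨⟨0, hm⟩⟩
  set b : Basis (Fin m) ℂ (Fin m → ℂ) := basisOfLinearIndependentOfCardEqFinrank hli hcard
    with hbdef
  have hb : ∀ i : Fin m, b i = (f ^ (i : ℕ)) e := by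
    intro i
    rw [hbdef, coe_basisOfLinearIndependentOfCardEqFinrank]
  have hfb : ∀ i : Fin m, f (b i) = if h : (i : ℕ) + 1 < m then b ⟨(i : ℕ) + 1, h⟩ else 0 := by
    intro i
    rw [hb i]
    by_cases h : (i : ℕ) + 1 < m
    · rw [dif_pos h, hb ⟨(i : ℕ) + 1, h⟩, ← Module.End.mul_apply, ← pow_succ']
    · rw [dif_neg h]
      have hi1 : (i : ℕ) + 1 = m := by
        have := i.isLt
        omega
      rw [← Module.End.mul_apply, ← pow_succ', hi1, hfm, LinearMap.zero_apply]
  have hfinal := aux_ker_finrank hm b f g hfb hgm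
  rw [hWfr] at hfinal

  refine ⟨hnil, ?_⟩
  rw [hfinal, min_eq_right hmn]
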